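/- If A, B ⊆ ℕ both have asymptotic density and d(A) < d(B), then there exists D with asymptotic density such that A ⊆ D ⊆ A ∪ B and d(D) = d(B). -/

import Mathlib

open Filter

/-- `cnt A n` = number of elements of `A` in `[1, n]`, as a real number. -/
noncomputable def cnt (A : Set ℕ) (n : ℕ) : ℝ :=
  ∑ k ∈ Finset.Icc 1 n, A.indicator (fun _ => (1 : ℝ)) k

/-- `A` has asymptotic density `x`. -/
def HasDens (A : Set ℕ) (x : ℝ) : Prop :=
  Filter.Tendsto (fun n => cnt A n / n) Filter.atTop (nhds x)

open Classical in
lemma cnt_succ (A : Set ℕ) (n : ℕ) :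
    cnt A (n+1) = cnt A n + (if n+1 ∈ A then 1 else 0) := by
  unfold cnt
  rw [Finset.sum_Icc_succ_top (Nat.le_add_left 1 n), Set.indicator_apply]

lemma cnt_nonneg (A : Set ℕ) (n : ℕ) : 0 ≤ cnt A n :=
  Finset.sum_nonneg fun i _ => Set.indicator_nonneg (fun _ _ => zero_le_one) i

lemma cnt_le (A : Set ℕ) (n : ℕ) : cnt A n ≤ n := by
  classical
  calc cnt A n ≤ ∑ _k ∈ Finset.Icc 1 n, (1:ℝ) := by
        refine Finset.sum_le_sum fun i _ => ?_
        rw [Set.indicator_apply]; split <;> norm_num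
    _ = n := by simp

open Classical in
/-- Greedy counting function. -/
noncomputable def cD (A B : Set ℕ) : ℕ → ℝ
  | 0 => 0
  | n+1 => cD A B n + (if (n+1) ∈ A ∨ ((n+1) ∈ B ∧ cD A B n < cnt B n) then 1 else 0)

/-- The greedy intermediate set. -/
def Dset (A B : Set ℕ) : Set ℕ :=
  {k | k ∈ A ∨ (k ∈ B ∧ cD A B (k-1) < cnt B (k-1))}

lemma cnt_Dset (A B : Set ℕ) : ∀ n, cnt (Dset A B) n = cD A B n := by
  intro n
  induction n with
  | zero => simp [cnt, cD]
  | succ n ih =>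
    classical
    rw [cnt_succ, ih]
    simp only [cD]
    congr 1
    have : (n + 1 ∈ Dset A B) ↔ (n+1 ∈ A ∨ ((n+1) ∈ B ∧ cD A B n < cnt B n)) := by
      simp [Dset]
    exact if_congr this rfl rfl

lemma e_lower (A B : Set ℕ) : ∀ n, cnt B n - 1 ≤ cD A B n := by
  intro n
  induction n with
  | zero => simp [cnt, cD]
  | succ n ih =>
    rw [cnt_succ]
    simp only [cD]
    by_cases h1 : (n+1) ∈ A <;> by_cases h2 : (n+1) ∈ B <;>
      by_cases h3 : cD A B n < cnt B n <;> simp [h1, h2, h3] <;> linarith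

lemma e_upper (A B : Set ℕ) : ∀ n, ∃ m ≤ n, cD A B m ≤ cnt B m ∧
    cD A B n - cnt B n ≤ 2 + (cnt B m - cnt A m) - (cnt B n - cnt A n) := by
  intro n
  induction n with
  | zero => exact ⟨0, le_refl 0, by simp [cnt, cD], by simp [cnt, cD]⟩
  | succ n ih =>
    by_cases h : cD A B (n+1) ≤ cnt B (n+1)
    · exact ⟨n+1, le_refl _, h, by linarith⟩
    · by_cases h2 : cD A B n ≤ cnt B n
      · refine ⟨n, Nat.le_succ n, h2, ?_⟩
        rw [cnt_succ, cnt_succ]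
        simp only [cD]
        by_cases hA : (n+1) ∈ A <;> by_cases hB : (n+1) ∈ B <;>
          by_cases h3 : cD A B n < cnt B n <;> simp [hA, hB, h3] <;> linarith
      · obtain ⟨m, hm, hm0, hbound⟩ := ih
        refine ⟨m, hm.trans (Nat.le_succ n), hm0, ?_⟩
        rw [cnt_succ, cnt_succ]
        simp only [cD]
        by_cases hA : (n+1) ∈ A <;> by_cases hB : (n+1) ∈ B <;>
          by_cases h3 : cD A B n < cnt B n <;> simp [hA, hB, h3] <;> linarith

lemma err_tendsto (A B : Set ℕ) (a b : ℝ) (hA : HasDens A a) (hB : HasDens B b)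
    (hab : a < b) :
    Filter.Tendsto (fun n => (cD A B n - cnt B n) / n) Filter.atTop (nhds 0) := by
  have elow := e_lower A B
  have eup := e_upper A B
  set c := b - a with hc
  have hcpos : 0 < c := by linarith
  have hg : Tendsto (fun n : ℕ => (cnt B n - cnt A n)/(n:ℝ)) atTop (nhds c) := by
    simpa [sub_div] using hB.sub hA
  rw [Metric.tendsto_atTop]
  intro ε hε
  set δ : ℝ := min (ε/4) c with hδdef
  have hδpos : 0 < δ := lt_min (by linarith) hcpos
  have hδε : δ ≤ ε/4 := min_le_left _ _
  have hδc : δ ≤ c := min_le_right _ _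
  obtain ⟨N₀, hN₀⟩ := Metric.tendsto_atTop.mp hg δ hδpos
  set N₁ : ℕ := max N₀ 1 with hN₁def
  have hN₁pos : 1 ≤ N₁ := le_max_right _ _
  have hgb : ∀ n : ℕ, N₁ ≤ n → (c - δ) * n ≤ cnt B n - cnt A n ∧
      cnt B n - cnt A n ≤ (c + δ) * n := by
    intro n hn
    have hnp : (0:ℝ) < n := by
      have h1 : 1 ≤ n := le_trans hN₁pos hn
      exact_mod_cast h1
    have h := hN₀ n (le_trans (le_max_left _ _) hn)
    rw [Real.dist_eq, abs_lt] at h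
    constructor
    · nlinarith [h.1, (div_mul_cancel₀ (cnt B n - cnt A n) (ne_of_gt hnp))]
    · nlinarith [h.2, (div_mul_cancel₀ (cnt B n - cnt A n) (ne_of_gt hnp))]
  have key : ∀ n : ℕ, N₁ ≤ n → |cD A B n - cnt B n| ≤ 2 + N₁ + 2*δ*n := by
    intro n hn
    have hnp : (0:ℝ) ≤ n := Nat.cast_nonneg n
    have hδn : 0 ≤ δ * n := mul_nonneg hδpos.le hnp
    rw [abs_le]
    constructor
    · have h0 := elow n
      have h1 : (-1:ℝ) ≤ cD A B n - cnt B n := by linarith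
      have hN₁0 : (0:ℝ) ≤ N₁ := Nat.cast_nonneg _
      linarith
    · obtain ⟨m, hmn, hm0, hbound⟩ := eup n
      have hgn := (hgb n hn).1
      rcases le_total m N₁ with hmN | hmN
      · have h1 : cnt B m - cnt A m ≤ (N₁:ℝ) := by
          have := cnt_le B m
          have := cnt_nonneg A m
          have hmc : (m:ℝ) ≤ N₁ := by exact_mod_cast hmN
          linarith
        have h2 : (0:ℝ) ≤ (c - δ) * n := mul_nonneg (by linarith) hnp
        linarith
      · have hgm := (hgb m hmN).2
        have hmc : (m:ℝ) ≤ n := by exact_mod_cast hmn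
        have h3 : (c + δ) * m ≤ (c + δ) * n :=
          mul_le_mul_of_nonneg_left hmc (by linarith)
        have hN₁0 : (0:ℝ) ≤ N₁ := Nat.cast_nonneg _
        linarith
  obtain ⟨N₂, hN₂⟩ := exists_nat_gt ((2 + (N₁:ℝ)) / (ε/4))
  refine ⟨max N₁ N₂, fun n hn => ?_⟩
  have hn₁ : N₁ ≤ n := le_trans (le_max_left _ _) hn
  have hn₂ : N₂ ≤ n := le_trans (le_max_right _ _) hn
  have hnp : (0:ℝ) < n := by
    have h1 : 1 ≤ n := le_trans hN₁pos hn₁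
    exact_mod_cast h1
  rw [Real.dist_eq, sub_zero, abs_div, abs_of_pos hnp, div_lt_iff₀ hnp]
  have hk := key n hn₁
  have hq : (2 + (N₁:ℝ)) < ε/4 * n := by
    have hnn : ((2 + (N₁:ℝ)) / (ε/4)) < n := by
      have : (N₂:ℝ) ≤ n := by exact_mod_cast hn₂
      linarith
    have hε4 : (0:ℝ) < ε/4 := by linarith
    calc (2 + (N₁:ℝ)) = ((2 + (N₁:ℝ)) / (ε/4)) * (ε/4) := by field_simp
      _ < n * (ε/4) := by exact mul_lt_mul_of_pos_right hnn hε4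
      _ = ε/4 * n := by ring
  have hδq : 2*δ*n ≤ 2*(ε/4)*n := by nlinarith
  calc |cD A B n - cnt B n| ≤ 2 + N₁ + 2*δ*n := hk
    _ < ε/4 * n + ε/2 * n := by nlinarith
    _ ≤ ε * n := by nlinarith

theorem stmt_10 (A B : Set ℕ) (a b : ℝ) (hA : HasDens A a) (hB : HasDens B b)
    (hab : a < b) :
    ∃ D : Set ℕ, A ⊆ D ∧ D ⊆ A ∪ B ∧ HasDens D b := by
  refine ⟨Dset A B, fun x hx => Or.inl hx, ?_, ?_⟩
  · rintro x (h | ⟨h, -⟩)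
    · exact Or.inl h
    · exact Or.inr h
  · have hfun : (fun n : ℕ => cnt (Dset A B) n / n)
        = fun n : ℕ => (cD A B n - cnt B n)/n + cnt B n/n := by
      funext n
      rw [← add_div, sub_add_cancel, cnt_Dset]
    unfold HasDens
    rw [hfun]
    simpa using (err_tendsto A B a b hA hB hab).add hB
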